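/- Let l be a prime with l ≥ 19, set D = (−1)^((l−1)/2) · l, let ζ = exp(2πi/l) ∈ ℂ, and define ψ⁺(x) = ∏ (x − ζ^i) over those i ∈ {1, …, l−1} that are quadratic residues modulo l, and ψ⁻(x) = ∏ (x − ζ^i) over those i ∈ {1, …, l−1} that are quadratic non-residues modulo l. Then for every integer x with x ≥ l², the quantity Q(x) = (ψ⁺(x) − ψ⁻(x))/√D satisfies | |Q(x)| − x^((l−3)/2) | < x^((l−3)/2)/(2√l), where |·| is the complex absolute value and √D denotes a complex square root of D. -/

import Mathlib

open Finset

private lemma pow_one_add_le_aux (t : ℝ) (ht : 0 ≤ t) :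
    ∀ n : ℕ, t * (n : ℝ)^2 ≤ 1 → (1+t)^n ≤ 1 + (n:ℝ)*t + (n:ℝ)^2*t^2 := by
  intro n
  induction n with
  | zero => simp
  | succ m ih =>
    intro h
    have hsq : (m:ℝ)^2 ≤ ((m:ℝ)+1)^2 := by nlinarith [Nat.cast_nonneg (α := ℝ) m]
    have hm : t * (m:ℝ)^2 ≤ 1 := by
      push_cast at h
      calc t * (m:ℝ)^2 ≤ t * ((m:ℝ)+1)^2 := mul_le_mul_of_nonneg_left hsq ht
        _ ≤ 1 := h
    have h1 := ih hm
    have h2 : (1+t)^(m+1) = (1+t)^m * (1+t) := pow_succ _ _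
    have h3 : (1+t)^m * (1+t) ≤ (1 + (m:ℝ)*t + (m:ℝ)^2*t^2) * (1+t) :=
      mul_le_mul_of_nonneg_right h1 (by linarith)
    have hmn : (0:ℝ) ≤ (m:ℝ) := Nat.cast_nonneg m
    push_cast
    nlinarith [mul_nonneg (mul_nonneg ht ht) ht, sq_nonneg t, mul_nonneg ht hmn,
      mul_nonneg (mul_nonneg ht ht) hmn]

private lemma abs_prod_sub_one_aux (t : ℝ) (ht : 0 ≤ t) (u : ℕ → ℂ) (s : Finset ℕ)
    (hu : ∀ i ∈ s, ‖u i‖ ≤ t) :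
    ‖(∏ i ∈ s, (1 - u i)) - 1‖ ≤ (1+t)^s.card - 1 := by
  classical
  induction s using Finset.induction_on with
  | empty => simp
  | @insert a s ha ih =>
    have hu' : ∀ i ∈ s, ‖u i‖ ≤ t := fun i hi => hu i (mem_insert_of_mem hi)
    have iha := ih hu'
    have hP : ‖∏ i ∈ s, (1 - u i)‖ ≤ (1+t)^s.card := by
      calc ‖∏ i ∈ s, (1 - u i)‖
          ≤ ‖(∏ i ∈ s, (1 - u i)) - 1‖ + 1 := by
            simpa using norm_add_le ((∏ i ∈ s, (1 - u i)) - 1) 1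
        _ ≤ (1+t)^s.card := by linarith
    rw [Finset.prod_insert ha, Finset.card_insert_of_notMem ha]
    have key : (1 - u a) * ∏ i ∈ s, (1 - u i) - 1
        = ((∏ i ∈ s, (1 - u i)) - 1) - u a * ∏ i ∈ s, (1 - u i) := by ring
    rw [key, sub_eq_add_neg]
    calc ‖((∏ i ∈ s, (1 - u i)) - 1) + -(u a * ∏ i ∈ s, (1 - u i))‖
          ≤ ‖(∏ i ∈ s, (1 - u i)) - 1‖
          + ‖u a * ∏ i ∈ s, (1 - u i)‖ := by
          refine le_trans (norm_add_le _ _) ?_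
          rw [norm_neg]
      _ ≤ ((1+t)^s.card - 1) + t * (1+t)^s.card := by
          rw [norm_mul]
          refine add_le_add iha (mul_le_mul (hu a (mem_insert_self a s)) hP (norm_nonneg _) ht)
      _ = (1+t)^(s.card+1) - 1 := by ring

private lemma abs_prod_sub_one_add_sum_aux (t : ℝ) (ht : 0 ≤ t) (u : ℕ → ℂ) (s : Finset ℕ)
    (hu : ∀ i ∈ s, ‖u i‖ ≤ t) :
    ‖(∏ i ∈ s, (1 - u i)) - 1 + ∑ i ∈ s, u i‖
      ≤ (1+t)^s.card - 1 - s.card * t := by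
  classical
  induction s using Finset.induction_on with
  | empty => simp
  | @insert a s ha ih =>
    have hu' : ∀ i ∈ s, ‖u i‖ ≤ t := fun i hi => hu i (mem_insert_of_mem hi)
    have iha := ih hu'
    have hP1 := abs_prod_sub_one_aux t ht u s hu'
    rw [Finset.prod_insert ha, Finset.sum_insert ha, Finset.card_insert_of_notMem ha]
    have key : (1 - u a) * (∏ i ∈ s, (1 - u i)) - 1 + (u a + ∑ i ∈ s, u i)
        = ((∏ i ∈ s, (1 - u i)) - 1 + ∑ i ∈ s, u i)
          + -(u a * ((∏ i ∈ s, (1 - u i)) - 1)) := by ring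
    rw [key]
    calc ‖_‖
        ≤ ‖(∏ i ∈ s, (1 - u i)) - 1 + ∑ i ∈ s, u i‖
          + ‖u a * ((∏ i ∈ s, (1 - u i)) - 1)‖ := by
          refine le_trans (norm_add_le _ _) ?_
          rw [norm_neg]
      _ ≤ ((1+t)^s.card - 1 - s.card * t)
          + t * ((1+t)^s.card - 1) := by
          rw [norm_mul]
          refine add_le_add iha (mul_le_mul (hu a (mem_insert_self a s)) hP1 (norm_nonneg _) ht)
      _ ≤ (1+t)^(s.card+1) - 1 - (↑(s.card+1)) * t := by
          push_cast; ring_nf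
          nlinarith [pow_nonneg (by linarith : (0:ℝ) ≤ 1+t) s.card]

private lemma sum_Ico_eq_sum_zmod {M : Type*} [AddCommMonoid M] (l : ℕ) [NeZero l]
    (F : ZMod l → M) :
    ∑ i ∈ Finset.Ico 1 l, F (i : ZMod l)
      = ∑ u ∈ Finset.univ.filter (fun u : ZMod l => u ≠ 0), F u := by
  refine Finset.sum_nbij' (fun i => (i : ZMod l)) (fun u => u.val) ?_ ?_ ?_ ?_ ?_
  · intro i hi
    rw [Finset.mem_Ico] at hi
    simp only [Finset.mem_filter, Finset.mem_univ, true_and]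
    rw [Ne, ZMod.natCast_eq_zero_iff]
    intro hd
    have := Nat.le_of_dvd (by omega) hd
    omega
  · intro u hu
    simp only [Finset.mem_filter, Finset.mem_univ, true_and] at hu
    rw [Finset.mem_Ico]
    have h1 := ZMod.val_lt u
    have h2 : u.val ≠ 0 := fun h => hu ((ZMod.val_eq_zero u).mp h)
    exact ⟨Nat.one_le_iff_ne_zero.mpr h2, h1⟩
  · intro i hi
    rw [Finset.mem_Ico] at hi
    exact ZMod.val_cast_of_lt hi.2
  · intro u _
    exact ZMod.natCast_rightInverse u
  · intro i _
    rfl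

set_option maxHeartbeats 1000000 in
open scoped Classical in
theorem psi_diff_estimate
    (l : ℕ) (hl : l.Prime) (hl19 : 19 ≤ l)
    (D : ℤ) (hD : D = (-1) ^ ((l - 1) / 2) * l)
    (s : ℂ) (hs : s = if 0 ≤ D then ((Real.sqrt D : ℝ) : ℂ)
      else Complex.I * ((Real.sqrt (-D) : ℝ) : ℂ))
    (ζ : ℂ) (hζ : ζ = Complex.exp (2 * Real.pi * Complex.I / l))
    (ψp ψm : ℤ → ℂ)
    (hψp : ∀ x : ℤ, ψp x = ∏ i ∈ (Finset.Ico 1 l).filter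
        (fun i => ¬ l ∣ i ∧ ∃ a : ℕ, i ≡ a ^ 2 [MOD l]), ((x : ℂ) - ζ ^ i))
    (hψm : ∀ x : ℤ, ψm x = ∏ i ∈ (Finset.Ico 1 l).filter
        (fun i => ¬ (¬ l ∣ i ∧ ∃ a : ℕ, i ≡ a ^ 2 [MOD l])), ((x : ℂ) - ζ ^ i))
    (x : ℤ) (hx : (l : ℤ) ^ 2 ≤ x) :
    |‖(ψp x - ψm x) / s‖ - (x : ℝ) ^ ((l - 3) / 2)|
      < (x : ℝ) ^ ((l - 3) / 2) / (2 * Real.sqrt l) := by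
  haveI : Fact l.Prime := ⟨hl⟩
  haveI : NeZero l := ⟨by omega⟩
  -- basic numerology
  obtain ⟨k, hk⟩ := hl.odd_of_ne_two (by omega)
  obtain ⟨j, hjl, hj7⟩ : ∃ j : ℕ, l = 2*j+5 ∧ 7 ≤ j := ⟨k - 2, by omega, by omega⟩
  have hexp : (l - 3) / 2 = j + 1 := by omega
  have hl0 : (l : ℂ) ≠ 0 := Nat.cast_ne_zero.mpr (by omega)
  have hζl : ζ ^ l = 1 := by
    rw [hζ, ← Complex.exp_nat_mul, mul_div_cancel₀ _ hl0, Complex.exp_two_pi_mul_I]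
  have hcond : ∀ i ∈ Finset.Ico 1 l,
      ((¬ l ∣ i ∧ ∃ a : ℕ, i ≡ a ^ 2 [MOD l]) ↔ IsSquare ((i : ZMod l))) := by
    intro i hi
    rw [Finset.mem_Ico] at hi
    have hnd : ¬ l ∣ i := fun hd => by have := Nat.le_of_dvd (by omega) hd; omega
    constructor
    · rintro ⟨-, a, ha⟩
      refine ⟨(a : ZMod l), ?_⟩
      have : (i : ZMod l) = ((a^2 : ℕ) : ZMod l) := (ZMod.natCast_eq_natCast_iff _ _ _).mpr ha
      rw [this]; push_cast; ring
    · rintro ⟨r, hr⟩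
      refine ⟨hnd, r.val, (ZMod.natCast_eq_natCast_iff _ _ _).mp ?_⟩
      push_cast
      rw [ZMod.natCast_val, ZMod.cast_id, hr]; ring
  have hne0 : ∀ i ∈ Finset.Ico 1 l, ((i : ZMod l)) ≠ 0 := by
    intro i hi
    rw [Finset.mem_Ico] at hi
    rw [Ne, ZMod.natCast_eq_zero_iff]
    intro hd; have := Nat.le_of_dvd (by omega) hd; omega
  have hchar2 : ringChar (ZMod l) ≠ 2 := by rw [ZMod.ringChar_zmod_n]; omega
  set χ' := quadraticChar (ZMod l) with hχ'
  set χ := χ'.ringHomComp (Int.castRingHom ℂ) with hχdef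
  set ψ := AddChar.zmodChar l hζl with hψdef
  set Sp := (Finset.Ico 1 l).filter
      (fun i => ¬ l ∣ i ∧ ∃ a : ℕ, i ≡ a ^ 2 [MOD l]) with hSpdef
  set Sm := (Finset.Ico 1 l).filter
      (fun i => ¬ (¬ l ∣ i ∧ ∃ a : ℕ, i ≡ a ^ 2 [MOD l])) with hSmdef
  have hfull : ∀ {G : Type} [inst : AddCommMonoid G] (F : ZMod l → G), F 0 = 0 →
      ∑ i ∈ Finset.Ico 1 l, F (i : ZMod l) = ∑ u : ZMod l, F u := by
    intro G inst F hF0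
    rw [sum_Ico_eq_sum_zmod l F]
    refine Finset.sum_subset (Finset.filter_subset _ _) ?_
    intro u _ hu
    simp only [Finset.mem_filter, Finset.mem_univ, true_and, not_not] at hu
    rw [hu, hF0]
  have hsplit : ∀ {G : Type} [inst : AddCommMonoid G] (f : ℕ → G),
      ∑ i ∈ Finset.Ico 1 l, f i = ∑ i ∈ Sp, f i + ∑ i ∈ Sm, f i := by
    intro G inst f
    rw [hSpdef, hSmdef]
    exact (Finset.sum_filter_add_sum_filter_not _ _ _).symm
  have hχ'Sp : ∀ i ∈ Sp, χ' ((i : ZMod l)) = 1 := by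
    intro i hi
    rw [hSpdef, Finset.mem_filter] at hi
    exact (quadraticChar_one_iff_isSquare (hne0 i hi.1)).mpr ((hcond i hi.1).mp hi.2)
  have hχ'Sm : ∀ i ∈ Sm, χ' ((i : ZMod l)) = -1 := by
    intro i hi
    rw [hSmdef, Finset.mem_filter] at hi
    exact quadraticChar_neg_one_iff_not_isSquare.mpr (fun hsq => hi.2 ((hcond i hi.1).mpr hsq))
  have hcards : (Sp.card : ℤ) - Sm.card = 0 := by
    have h2 : ∑ u : ZMod l, χ' u = 0 := quadraticChar_sum_zero hchar2
    have h1 := hfull (fun u => χ' u) (by rw [hχ']; exact quadraticChar_zero)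
    rw [h2, hsplit (fun i => χ' ((i : ZMod l)))] at h1
    rw [Finset.sum_congr rfl hχ'Sp, Finset.sum_congr rfl hχ'Sm] at h1
    simp only [Finset.sum_const, nsmul_eq_mul, mul_one, mul_neg] at h1
    linarith [h1]
  have hcardsum : Sp.card + Sm.card = l - 1 := by
    rw [hSpdef, hSmdef, Finset.card_filter_add_card_filter_not, Nat.card_Ico]
  have hSpcard : Sp.card = j + 2 := by omega
  have hSmcard : Sm.card = j + 2 := by omega
  -- the Gauss sum
  set g := gaussSum χ ψ with hgdef
  have hψapp : ∀ i : ℕ, ψ ((i : ZMod l)) = ζ ^ i := fun i => AddChar.zmodChar_apply' hζl i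
  have hχ0 : χ 0 = 0 := by
    rw [hχdef, MulChar.ringHomComp_apply, hχ', quadraticChar_zero]
    simp
  have hg : g = (∑ i ∈ Sp, ζ^i) - ∑ i ∈ Sm, ζ^i := by
    have h1 := hfull (fun u => χ u * ψ u) (by show χ 0 * ψ 0 = 0; rw [hχ0, zero_mul])
    rw [hgdef]; simp only [gaussSum]; rw [← h1, hsplit (fun i => χ ((i:ZMod l)) * ψ ((i:ZMod l)))]
    have e1 : ∀ i ∈ Sp, χ ((i : ZMod l)) * ψ ((i : ZMod l)) = ζ ^ i := by
      intro i hi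
      rw [hψapp, hχdef, MulChar.ringHomComp_apply, hχ'Sp i hi]
      simp
    have e2 : ∀ i ∈ Sm, χ ((i : ZMod l)) * ψ ((i : ZMod l)) = -ζ ^ i := by
      intro i hi
      rw [hψapp, hχdef, MulChar.ringHomComp_apply, hχ'Sm i hi]
      simp
    rw [Finset.sum_congr rfl e1, Finset.sum_congr rfl e2, Finset.sum_neg_distrib]
    ring
  have hχquad : χ.IsQuadratic := (quadraticChar_isQuadratic (ZMod l)).comp _
  have hχne : χ ≠ 1 :=
    (MulChar.ringHomComp_ne_one_iff Int.cast_injective).mpr (quadraticChar_ne_one hchar2)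
  have hζprim : IsPrimitiveRoot ζ l := by
    rw [hζ]; exact Complex.isPrimitiveRoot_exp l (by omega)
  have hψprim : ψ.IsPrimitive := AddChar.zmodChar_primitive_of_primitive_root l hζprim
  have hgcard : g * gaussSum χ⁻¹ ψ⁻¹ = (l : ℂ) := by
    rw [hgdef, gaussSum_mul_gaussSum_eq_card hχne hψprim, ZMod.card]
  have hconj : gaussSum χ⁻¹ ψ⁻¹ = (starRingEnd ℂ) g := by
    rw [hχquad.inv, hgdef]; simp only [gaussSum]; rw [map_sum]
    refine Finset.sum_congr rfl fun u _ => ?_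
    rw [map_mul]
    congr 1
    · rw [hχdef, MulChar.ringHomComp_apply]
      exact (map_intCast (starRingEnd ℂ) _).symm
    · exact (AddChar.starComp_apply (by rw [ZMod.ringChar_zmod_n]; omega) u).symm
  have habsg : ‖g‖ = Real.sqrt l := by
    have h1 : g * (starRingEnd ℂ) g = (l : ℂ) := by rw [← hconj]; exact hgcard
    rw [Complex.mul_conj] at h1
    have h2 : Complex.normSq g = (l : ℝ) := by exact_mod_cast h1
    rw [Complex.norm_def, h2]
  -- |s| = √l
  have hlpos : (0:ℝ) < l := by positivity
  have habss : ‖s‖ = Real.sqrt l := by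
    rcases Nat.even_or_odd ((l - 1) / 2) with he | ho
    · have hDl : D = (l : ℤ) := by rw [hD, he.neg_one_pow, one_mul]
      rw [hs, if_pos (by rw [hDl]; positivity), Complex.norm_real, Real.norm_eq_abs,
        abs_of_nonneg (Real.sqrt_nonneg _), hDl]
      norm_num
    · have hDl : D = -(l : ℤ) := by rw [hD, ho.neg_one_pow]; ring
      have : ¬ (0 ≤ D) := by rw [hDl]; simp; omega
      rw [hs, if_neg this, norm_mul, Complex.norm_I, one_mul, Complex.norm_real, Real.norm_eq_abs,
        abs_of_nonneg (Real.sqrt_nonneg _), hDl]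
      norm_num
  -- real estimates setup
  set X : ℝ := (x : ℝ) with hXdef
  have hXl : ((l:ℝ))^2 ≤ X := by rw [hXdef]; exact_mod_cast hx
  have hX0 : (0:ℝ) < X := lt_of_lt_of_le (by positivity) hXl
  have hxZ : (0:ℤ) < x := lt_of_lt_of_le (by positivity) hx
  have hXc0 : (x : ℂ) ≠ 0 := Int.cast_ne_zero.mpr hxZ.ne'
  set t : ℝ := X⁻¹ with htdef
  have ht0 : 0 ≤ t := by positivity
  have hζabs : ∀ i : ℕ, ‖ζ ^ i‖ = 1 := by
    intro i
    have h1 : ‖ζ‖ = 1 := by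
      have he : (2 * (Real.pi:ℂ) * Complex.I / (l:ℂ)) = ((2*Real.pi/l : ℝ):ℂ) * Complex.I := by
        push_cast; ring
      rw [hζ, he, Complex.norm_exp_ofReal_mul_I]
    rw [norm_pow, h1, one_pow]
  have habsu : ∀ i : ℕ, ‖ζ^i / (x:ℂ)‖ ≤ t := by
    intro i
    rw [norm_div, hζabs i, htdef, Complex.norm_intCast, ← hXdef, abs_of_pos hX0, one_div]
  -- products
  set Pp := ∏ i ∈ Sp, (1 - ζ^i / (x:ℂ)) with hPpdef
  set Pm := ∏ i ∈ Sm, (1 - ζ^i / (x:ℂ)) with hPmdef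
  have hfact : ∀ (S : Finset ℕ), ∏ i ∈ S, ((x:ℂ) - ζ^i) = (x:ℂ)^S.card * ∏ i ∈ S, (1 - ζ^i / (x:ℂ)) := by
    intro S
    rw [← Finset.prod_const, ← Finset.prod_mul_distrib]
    refine Finset.prod_congr rfl fun i _ => ?_
    rw [mul_one_sub, mul_div_cancel₀ _ hXc0]
  have hψpx : ψp x = (x:ℂ)^(j+2) * Pp := by
    rw [hψp x, hfact Sp, hSpcard]
  have hψmx : ψm x = (x:ℂ)^(j+2) * Pm := by
    rw [hψm x, hfact Sm, hSmcard]
  -- key identity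
  set A : ℂ := ∑ i ∈ Sp, ζ^i with hAdef
  set B : ℂ := ∑ i ∈ Sm, ζ^i with hBdef
  have hσp : ∑ i ∈ Sp, ζ^i / (x:ℂ) = A / (x:ℂ) := by
    rw [hAdef, ← Finset.sum_div]
  have hσm : ∑ i ∈ Sm, ζ^i / (x:ℂ) = B / (x:ℂ) := by
    rw [hBdef, ← Finset.sum_div]
  have hkey : ψp x - ψm x + (x:ℂ)^(j+1) * g
      = (x:ℂ)^(j+2) * ((Pp - 1 + ∑ i ∈ Sp, ζ^i / (x:ℂ)) - (Pm - 1 + ∑ i ∈ Sm, ζ^i / (x:ℂ))) := by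
    have hgAB : g = A - B := hg
    have hxc : (x:ℂ) * (A / (x:ℂ)) = A := by field_simp
    have hxc' : (x:ℂ) * (B / (x:ℂ)) = B := by field_simp
    have hcA : (x:ℂ)^(j+2) * (A / (x:ℂ)) = (x:ℂ)^(j+1) * A := by
      rw [pow_succ, mul_assoc, hxc]
    have hcB : (x:ℂ)^(j+2) * (B / (x:ℂ)) = (x:ℂ)^(j+1) * B := by
      rw [pow_succ, mul_assoc, hxc']
    rw [hψpx, hψmx, hgAB, hσp, hσm]
    linear_combination hcB - hcA
  -- estimates
  have htsq : t * ((j+2 : ℕ) : ℝ)^2 ≤ 1 := by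
    have h1 : ((j+2 : ℕ) : ℝ)^2 ≤ X := by
      refine le_trans ?_ hXl
      have : ((j+2 : ℕ) : ℝ) ≤ (l : ℝ) := by exact_mod_cast (by omega : (j+2 : ℕ) ≤ l)
      nlinarith [Nat.cast_nonneg (α := ℝ) (j+2)]
    rw [htdef]
    rw [inv_mul_le_iff₀ hX0, mul_one]
    exact h1
  have hrb : (1+t)^(j+2) - 1 - ((j+2 : ℕ) : ℝ) * t ≤ ((j+2 : ℕ):ℝ)^2 * t^2 := by
    have := pow_one_add_le_aux t ht0 (j+2) htsq
    linarith
  have hDp : ‖Pp - 1 + ∑ i ∈ Sp, ζ^i / (x:ℂ)‖ ≤ ((j+2 : ℕ):ℝ)^2 * t^2 := by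
    have h1 := abs_prod_sub_one_add_sum_aux t ht0 (fun i => ζ^i / (x:ℂ)) Sp (fun i _ => habsu i)
    rw [hSpcard] at h1
    rw [hPpdef]
    linarith
  have hDm : ‖Pm - 1 + ∑ i ∈ Sm, ζ^i / (x:ℂ)‖ ≤ ((j+2 : ℕ):ℝ)^2 * t^2 := by
    have h1 := abs_prod_sub_one_add_sum_aux t ht0 (fun i => ζ^i / (x:ℂ)) Sm (fun i _ => habsu i)
    rw [hSmcard] at h1
    rw [hPmdef]
    linarith
  have habsX : ‖(x:ℂ)‖ = X := by
    rw [Complex.norm_intCast, ← hXdef, abs_of_pos hX0]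
  have hE : ‖ψp x - ψm x + (x:ℂ)^(j+1) * g‖ ≤ 2 * ((j+2:ℕ):ℝ)^2 * X^j := by
    rw [hkey, norm_mul, norm_pow, habsX]
    have h2 : ‖(Pp - 1 + ∑ i ∈ Sp, ζ^i / (x:ℂ)) - (Pm - 1 + ∑ i ∈ Sm, ζ^i / (x:ℂ))‖
        ≤ 2 * ((j+2 : ℕ):ℝ)^2 * t^2 := by
      rw [sub_eq_add_neg]
      refine le_trans (norm_add_le _ _) ?_
      rw [norm_neg]
      linarith
    have hXt : X^(j+2) * t^2 = X^j := by
      rw [htdef, inv_pow, pow_add]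
      rw [mul_assoc, mul_inv_cancel₀ (by positivity : (X:ℝ)^2 ≠ 0), mul_one]
    have heq2 : X^(j+2) * (2 * ((j+2 : ℕ):ℝ)^2 * t^2) = 2*((j+2:ℕ):ℝ)^2 * X^j := by
      rw [← hXt]; ring
    exact le_of_le_of_eq (mul_le_mul_of_nonneg_left h2 (pow_nonneg hX0.le (j+2))) heq2
  -- triangle inequality
  set A1 := ‖ψp x - ψm x‖ with hA1def
  have habsb : ‖-((x:ℂ)^(j+1) * g)‖ = X^(j+1) * Real.sqrt l := by
    rw [norm_neg, norm_mul, norm_pow, habsX, habsg]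
  have htri : |A1 - X^(j+1) * Real.sqrt l| ≤ 2 * ((j+2:ℕ):ℝ)^2 * X^j := by
    rw [hA1def, ← habsb]
    refine le_trans (abs_norm_sub_norm_le _ _) ?_
    rw [sub_neg_eq_add]
    exact hE
  -- final arithmetic
  have hsl : (0:ℝ) < Real.sqrt l := Real.sqrt_pos.mpr hlpos
  have hgoal1 : ‖(ψp x - ψm x) / s‖ = A1 / Real.sqrt l := by
    rw [norm_div, habss, hA1def]
  rw [hgoal1, hexp]
  have heq : A1 / Real.sqrt l - X^(j+1) = (A1 - X^(j+1) * Real.sqrt l) / Real.sqrt l := by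
    field_simp
  rw [hXdef] at heq htri ⊢
  rw [heq, abs_div, abs_of_pos hsl]
  rw [div_lt_div_iff₀ hsl (by positivity : (0:ℝ) < 2 * Real.sqrt l)]
  have h4j : 4 * ((j+2:ℕ):ℝ)^2 < X := by
    have h1 : ((2*(j:ℝ)+4))^2 < ((l:ℝ))^2 := by
      have : (l:ℝ) = 2*(j:ℝ)+5 := by rw [hjl]; push_cast; ring
      nlinarith [Nat.cast_nonneg (α := ℝ) j]
    push_cast
    nlinarith [hXl]
  have hXj : (0:ℝ) < X^j := pow_pos hX0 j
  calc |A1 - (x:ℝ)^(j+1) * Real.sqrt l| * (2 * Real.sqrt l)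
      ≤ (2 * ((j+2:ℕ):ℝ)^2 * X^j) * (2 * Real.sqrt l) := by
        refine mul_le_mul_of_nonneg_right htri (by positivity)
    _ = (4 * ((j+2:ℕ):ℝ)^2) * (X^j * Real.sqrt l) := by ring
    _ < X * (X^j * Real.sqrt l) := by
        refine mul_lt_mul_of_pos_right h4j (by positivity)
    _ = (x:ℝ)^(j+1) * Real.sqrt l := by
        rw [← hXdef, pow_succ]
        ring
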